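/- Let A be an integer-valued random variable and let η ≥ 0 satisfy max_{a ∈ {0,1,2,3}} Pr[A ≡ a (mod 4)] ≤ 1 − η. Then |E[𝗂^A]| ≤ 1 − η/4, where 𝗂 is the imaginary unit and the expectation is taken in the complex numbers. -/

import Mathlib

open Finset

def tow : ℕ → ℕ
  | 0 => 1
  | x + 1 => 2 ^ tow x

def hw {ι : Type*} [Fintype ι] (x : ι → Bool) : ℕ :=
  (Finset.univ.filter fun i => x i = true).card

def IsLocal {κ ι : Type*} (d : ℕ) (f : (κ → Bool) → ι → Bool) : Prop :=
  ∀ i : ι, ∃ T : Finset κ, T.card ≤ d ∧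
    ∀ x y : κ → Bool, (∀ j ∈ T, x j = y j) → f x i = f y i

def IsProductDist {κ : Type*} [Fintype κ] (p : (κ → Bool) → ℝ) : Prop :=
  ∃ γ : κ → ℝ, (∀ j, 0 ≤ γ j ∧ γ j ≤ 1) ∧
    ∀ x, p x = ∏ j, if x j then γ j else 1 - γ j

def IsDist {α : Type*} [Fintype α] (p : α → ℝ) : Prop :=
  (∀ a, 0 ≤ p a) ∧ ∑ a, p a = 1

noncomputable def push {α β : Type*} [Fintype α] [DecidableEq β] (f : α → β) (p : α → ℝ) :
    β → ℝ :=
  fun b => ∑ a, if f a = b then p a else 0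

noncomputable def tv {α : Type*} [Fintype α] (p q : α → ℝ) : ℝ :=
  (1 / 2) * ∑ a, |p a - q a|

noncomputable def biased {ι : Type*} [Fintype ι] (γ : ℝ) (x : ι → Bool) : ℝ :=
  ∏ i, if x i then γ else 1 - γ

noncomputable def unifParity (ι : Type*) [Fintype ι] [DecidableEq ι] (b : ℕ)
    (y : ι → Bool) : ℝ :=
  if hw y % 2 = b then
    (1 : ℝ) / ((Finset.univ.filter fun z : ι → Bool => hw z % 2 = b).card : ℝ)
  else 0

noncomputable def dHard (n m : ℕ) (p : (Fin n → Bool) × (Fin m → Bool)) : ℝ :=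
  biased (1 / 4) p.1 *
    (if hw p.1 % 2 = 1 then (1 / 2 : ℝ) ^ m
     else unifParity (Fin m) ((hw p.1 / 2) % 2) p.2)

def splitFun (n m : ℕ) (z : Fin (n + m) → Bool) : (Fin n → Bool) × (Fin m → Bool) :=
  (fun i => z (Fin.castAdd m i), fun j => z (Fin.natAdd n j))

noncomputable def dHard' (n m : ℕ) (z : Fin (n + m) → Bool) : ℝ :=
  dHard n m (splitFun n m z)

def wOf {V : Type*} (Z : V → Bool) : Sym2 V → Bool :=
  Sym2.lift ⟨fun u v => xor (Z u) (Z v), fun u v => Bool.xor_comm _ _⟩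

def ip {V : Type*} [Fintype V] (Z X : V → Bool) : ℕ :=
  (Finset.univ.filter fun v => Z v = true ∧ X v = true).card

noncomputable def dHost {V : Type*} [Fintype V] [DecidableEq V] (G : SimpleGraph V)
    [DecidableRel G.Adj] (z : (V ⊕ V ⊕ G.edgeSet) → Bool) : ℝ :=
  let X : V → Bool := fun v => z (Sum.inl v)
  let Y : V → Bool := fun v => z (Sum.inr (Sum.inl v))
  let W : G.edgeSet → Bool := fun e => z (Sum.inr (Sum.inr e))
  biased (1 / 4) X *
    ∑ Z : V → Bool,
      (1 / 2 : ℝ) ^ (Fintype.card V) *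
        (if ∀ e : G.edgeSet, W e = wOf Z e.1 then 1 else 0) *
        (if hw X % 2 = 1 then (1 / 2 : ℝ) ^ (Fintype.card V)
         else unifParity V ((ip Z X + hw X / 2) % 2) Y)

theorem stmt10 {α : Type*} [Fintype α] (μ : α → ℝ) (hμ : IsDist μ)
    (A : α → ℤ) (η : ℝ) (hη : 0 ≤ η)
    (hmax : ∀ a : ℤ, (∑ ω, if A ω % 4 = a % 4 then μ ω else 0) ≤ 1 - η) :
    ‖∑ ω, (μ ω : ℂ) * Complex.I ^ (A ω)‖ ≤ 1 - η / 4 := by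
  obtain ⟨hμ0, hμ1⟩ := hμ
  set p : ℤ → ℝ := fun a => ∑ ω, if A ω % 4 = a then μ ω else 0 with hp
  have hpnn : ∀ a, 0 ≤ p a := fun a =>
    Finset.sum_nonneg fun ω _ => by split <;> [exact hμ0 ω; rfl]
  have hple : ∀ a : ℤ, 0 ≤ a → a < 4 → p a ≤ 1 - η := by
    intro a h0 h4
    have := hmax a
    rwa [show a % 4 = a from Int.emod_eq_of_lt h0 h4] at this
  have hsum : p 0 + p 1 + p 2 + p 3 = 1 := by
    simp only [hp, ← Finset.sum_add_distrib]
    rw [← hμ1]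
    apply Finset.sum_congr rfl
    intro ω _
    have h : A ω % 4 = 0 ∨ A ω % 4 = 1 ∨ A ω % 4 = 2 ∨ A ω % 4 = 3 := by omega
    rcases h with h | h | h | h <;> simp [h]
  have h0 := hple 0 (by norm_num) (by norm_num)
  have h1' := hple 1 (by norm_num) (by norm_num)
  have h2 := hple 2 (by norm_num) (by norm_num)
  have h3 := hple 3 (by norm_num) (by norm_num)
  have e2 : Complex.I ^ (2 : ℤ) = -1 := by
    rw [show (2 : ℤ) = ((2 : ℕ) : ℤ) from rfl, zpow_natCast]
    exact Complex.I_sq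
  have e3 : Complex.I ^ (3 : ℤ) = -Complex.I := by
    rw [show (3 : ℤ) = (2 : ℤ) + 1 from rfl, zpow_add₀ Complex.I_ne_zero, e2,
      zpow_one]
    ring
  have hI4 : (Complex.I : ℂ) ^ (4 : ℤ) = 1 := by
    rw [show (4 : ℤ) = (2 : ℤ) + 2 from rfl, zpow_add₀ Complex.I_ne_zero, e2]
    ring
  -- rewrite the complex sum
  have key : (∑ ω, (μ ω : ℂ) * Complex.I ^ (A ω)) =
      (↑(p 0 - p 2) : ℂ) + (↑(p 1 - p 3) : ℝ) * Complex.I := by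
    have step : ∀ ω, (μ ω : ℂ) * Complex.I ^ (A ω) =
        (if A ω % 4 = 0 then (μ ω : ℂ) else 0)
        + (if A ω % 4 = 1 then (μ ω : ℂ) else 0) * Complex.I
        - (if A ω % 4 = 2 then (μ ω : ℂ) else 0)
        - (if A ω % 4 = 3 then (μ ω : ℂ) else 0) * Complex.I := by
      intro ω
      have hmod : Complex.I ^ (A ω) = Complex.I ^ (A ω % 4) := by
        conv_lhs => rw [← Int.mul_ediv_add_emod (A ω) 4]
        rw [zpow_add₀ Complex.I_ne_zero, zpow_mul, hI4, one_zpow, one_mul]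
      have h : A ω % 4 = 0 ∨ A ω % 4 = 1 ∨ A ω % 4 = 2 ∨ A ω % 4 = 3 := by omega
      rcases h with h | h | h | h <;> simp [hmod, h, e2, e3] <;> ring
    rw [Finset.sum_congr rfl fun ω _ => step ω]
    push_cast [hp, Finset.sum_sub_distrib, Finset.sum_add_distrib,
      apply_ite (fun x : ℝ => (x : ℂ))]
    simp only [← Finset.sum_mul]
    ring
  rw [key, Complex.norm_add_mul_I]
  have h1 : 0 ≤ 1 - η / 4 := by linarith
  rw [show (1 - η/4 : ℝ) = Real.sqrt ((1 - η/4)^2) from (Real.sqrt_sq h1).symm]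
  apply Real.sqrt_le_sqrt
  nlinarith [mul_nonneg (hpnn 0) (hpnn 2), mul_nonneg (hpnn 1) (hpnn 3),
    mul_nonneg (hpnn 0) (sub_nonneg.2 h0), mul_nonneg (hpnn 2) (sub_nonneg.2 h2),
    mul_nonneg (hpnn 1) (sub_nonneg.2 h1'), mul_nonneg (hpnn 3) (sub_nonneg.2 h3),
    sq_nonneg η, hη]
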